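/- Let (S, R) be a proper bipartition of V_A and (S', R') be a proper bipartition of V_B. Then q_S ≥ p_{S'} (coordinatewise dominance) holds if and only if (S ∪ S', R ∪ R') is an internal partition of G. -/

import Mathlib

open Finset

variable {V : Type*} [Fintype V] [DecidableEq V]

/-- `nbr G A v = |N_A(v)|`, the number of neighbors of `v` lying in `A`. -/
def nbr (G : SimpleGraph V) [DecidableRel G.Adj] (A : Finset V) (v : V) : ℕ :=
  (G.neighborFinset v ∩ A).card

/-- The query vector `q_S` (2 entries per vertex) associated to a bipartition `(S, R)` of `V_A`;
vertices outside `S ∪ R` are exactly those of `V_B`. -/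
def qvec (G : SimpleGraph V) [DecidableRel G.Adj] (n : ℕ) (S R : Finset V) (v : V) :
    Fin 2 → ℤ :=
  if v ∈ S then ![(nbr G S v : ℤ) - (nbr G R v : ℤ), (n : ℤ)]
  else if v ∈ R then ![(n : ℤ), (nbr G R v : ℤ) - (nbr G S v : ℤ)]
  else ![(nbr G S v : ℤ) - (nbr G R v : ℤ), (nbr G R v : ℤ) - (nbr G S v : ℤ)]

/-- The data vector `p_{S'}` (2 entries per vertex) associated to a bipartition `(S', R')`
of `V_B`; vertices outside `S' ∪ R'` are exactly those of `V_A`. -/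
def pvec (G : SimpleGraph V) [DecidableRel G.Adj] (n : ℕ) (S' R' : Finset V) (v : V) :
    Fin 2 → ℤ :=
  if v ∈ S' then ![(nbr G R' v : ℤ) - (nbr G S' v : ℤ), -(n : ℤ)]
  else if v ∈ R' then ![-(n : ℤ), (nbr G S' v : ℤ) - (nbr G R' v : ℤ)]
  else ![(nbr G R' v : ℤ) - (nbr G S' v : ℤ), (nbr G S' v : ℤ) - (nbr G R' v : ℤ)]

/-- An internal partition of `G`: a proper bipartition `(V_L, V_R)` of the vertex set such that
every vertex has at least as many neighbors in its own part as in the other part. -/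
def IsInternalPartition (G : SimpleGraph V) [DecidableRel G.Adj] (VL VR : Finset V) : Prop :=
  Disjoint VL VR ∧ VL ∪ VR = Finset.univ ∧ VL.Nonempty ∧ VR.Nonempty ∧
    (∀ v ∈ VL, nbr G VR v ≤ nbr G VL v) ∧ (∀ v ∈ VR, nbr G VL v ≤ nbr G VR v)


lemma nbr_le_card (G : SimpleGraph V) [DecidableRel G.Adj] (A : Finset V) (v : V) :
    nbr G A v ≤ Fintype.card V :=
  le_trans (Finset.card_le_card Finset.inter_subset_left) (Finset.card_le_univ _)

lemma nbr_union (G : SimpleGraph V) [DecidableRel G.Adj] {A B : Finset V}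
    (h : Disjoint A B) (v : V) : nbr G (A ∪ B) v = nbr G A v + nbr G B v := by
  unfold nbr
  rw [Finset.inter_union_distrib_left,
    Finset.card_union_of_disjoint (h.mono Finset.inter_subset_right Finset.inter_subset_right)]

/-- for proper bipartitions `(S, R)` of `V_A` and `(S', R')` of `V_B`,
coordinatewise dominance `q_S ≥ p_{S'}` holds iff `(S ∪ S', R ∪ R')` is an internal
partition of `G`. -/
theorem stmt_0 (G : SimpleGraph V) [DecidableRel G.Adj]
    (n : ℕ) (hn : n = Fintype.card V)
    (VA VB : Finset V) (hABdisj : Disjoint VA VB) (hABuniv : VA ∪ VB = Finset.univ)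
    (S R : Finset V) (hSR : Disjoint S R) (hSRu : S ∪ R = VA)
    (hS : S.Nonempty) (hR : R.Nonempty)
    (S' R' : Finset V) (hSR' : Disjoint S' R') (hSRu' : S' ∪ R' = VB)
    (hS' : S'.Nonempty) (hR' : R'.Nonempty) :
    (∀ v : V, ∀ k : Fin 2, pvec G n S' R' v k ≤ qvec G n S R v k) ↔
      IsInternalPartition G (S ∪ S') (R ∪ R') := by

  have hSS' : Disjoint S S' :=
    hABdisj.mono (hSRu ▸ Finset.subset_union_left) (hSRu' ▸ Finset.subset_union_left)
  have hSR'd : Disjoint S R' :=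
    hABdisj.mono (hSRu ▸ Finset.subset_union_left) (hSRu' ▸ Finset.subset_union_right)
  have hRS' : Disjoint R S' :=
    hABdisj.mono (hSRu ▸ Finset.subset_union_right) (hSRu' ▸ Finset.subset_union_left)
  have hRR' : Disjoint R R' :=
    hABdisj.mono (hSRu ▸ Finset.subset_union_right) (hSRu' ▸ Finset.subset_union_right)
  constructor
  · intro h
    refine ⟨?_, ?_, hS.mono Finset.subset_union_left, hR.mono Finset.subset_union_left, ?_, ?_⟩
    · rw [Finset.disjoint_union_left, Finset.disjoint_union_right, Finset.disjoint_union_right]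
      exact ⟨⟨hSR, hSR'd⟩, ⟨hRS'.symm, hSR'⟩⟩
    · rw [Finset.union_union_union_comm, hSRu, hSRu', hABuniv]
    · intro v hv
      rw [nbr_union G hSS', nbr_union G hRR']
      rcases Finset.mem_union.mp hv with hvS | hvS'
      · have h1 : v ∉ S' := Finset.disjoint_left.mp hSS' hvS
        have h2 : v ∉ R' := Finset.disjoint_left.mp hSR'd hvS
        have h0 := h v 0
        simp only [qvec, pvec, if_pos hvS, if_neg h1, if_neg h2,
          Matrix.cons_val_zero] at h0
        omega
      · have h1 : v ∉ S := Finset.disjoint_right.mp hSS' hvS'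
        have h2 : v ∉ R := Finset.disjoint_right.mp hRS' hvS'
        have h0 := h v 0
        simp only [qvec, pvec, if_pos hvS', if_neg h1, if_neg h2,
          Matrix.cons_val_zero] at h0
        omega
    · intro v hv
      rw [nbr_union G hSS', nbr_union G hRR']
      rcases Finset.mem_union.mp hv with hvR | hvR'
      · have h1 : v ∉ S := Finset.disjoint_right.mp hSR hvR
        have h2 : v ∉ S' := Finset.disjoint_left.mp hRS' hvR
        have h3 : v ∉ R' := Finset.disjoint_left.mp hRR' hvR
        have h0 := h v 1
        simp only [qvec, pvec, if_pos hvR, if_neg h1, if_neg h2, if_neg h3,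
          Matrix.cons_val_one, Matrix.head_cons, Matrix.cons_val_zero] at h0
        omega
      · have h1 : v ∉ S := Finset.disjoint_right.mp hSR'd hvR'
        have h2 : v ∉ R := Finset.disjoint_right.mp hRR' hvR'
        have h3 : v ∉ S' := Finset.disjoint_right.mp hSR' hvR'
        have h0 := h v 1
        simp only [qvec, pvec, if_pos hvR', if_neg h1, if_neg h2, if_neg h3,
          Matrix.cons_val_one, Matrix.head_cons, Matrix.cons_val_zero] at h0
        omega
  · rintro ⟨-, -, -, -, hL, hR2⟩
    intro v k
    have hnS := nbr_le_card G S v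
    have hnR := nbr_le_card G R v
    have hnS' := nbr_le_card G S' v
    have hnR' := nbr_le_card G R' v
    have hv : v ∈ VA ∪ VB := hABuniv ▸ Finset.mem_univ v
    rcases Finset.mem_union.mp hv with hvA | hvB
    · rcases Finset.mem_union.mp ((hSRu ▸ hvA : v ∈ S ∪ R)) with hvS | hvR
      · have h1 : v ∉ S' := Finset.disjoint_left.mp hSS' hvS
        have h2 : v ∉ R' := Finset.disjoint_left.mp hSR'd hvS
        have hL' := hL v (Finset.mem_union_left _ hvS)
        rw [nbr_union G hSS', nbr_union G hRR'] at hL'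
        fin_cases k <;>
          simp [qvec, pvec, if_pos hvS, if_neg h1, if_neg h2, hn,
            Matrix.cons_val_zero, Matrix.cons_val_one, Matrix.head_cons] <;> omega
      · have h1 : v ∉ S := Finset.disjoint_right.mp hSR hvR
        have h2 : v ∉ S' := Finset.disjoint_left.mp hRS' hvR
        have h3 : v ∉ R' := Finset.disjoint_left.mp hRR' hvR
        have hL' := hR2 v (Finset.mem_union_left _ hvR)
        rw [nbr_union G hSS', nbr_union G hRR'] at hL'
        fin_cases k <;>
          simp [qvec, pvec, if_pos hvR, if_neg h1, if_neg h2, if_neg h3, hn,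
            Matrix.cons_val_zero, Matrix.cons_val_one, Matrix.head_cons] <;> omega
    · rcases Finset.mem_union.mp ((hSRu' ▸ hvB : v ∈ S' ∪ R')) with hvS' | hvR'
      · have h1 : v ∉ S := Finset.disjoint_right.mp hSS' hvS'
        have h2 : v ∉ R := Finset.disjoint_right.mp hRS' hvS'
        have hL' := hL v (Finset.mem_union_right _ hvS')
        rw [nbr_union G hSS', nbr_union G hRR'] at hL'
        fin_cases k <;>
          simp [qvec, pvec, if_pos hvS', if_neg h1, if_neg h2, hn,
            Matrix.cons_val_zero, Matrix.cons_val_one, Matrix.head_cons] <;> omega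
      · have h1 : v ∉ S := Finset.disjoint_right.mp hSR'd hvR'
        have h2 : v ∉ R := Finset.disjoint_right.mp hRR' hvR'
        have h3 : v ∉ S' := Finset.disjoint_right.mp hSR' hvR'
        have hL' := hR2 v (Finset.mem_union_right _ hvR')
        rw [nbr_union G hSS', nbr_union G hRR'] at hL'
        fin_cases k <;>
          simp [qvec, pvec, if_pos hvR', if_neg h1, if_neg h2, if_neg h3, hn,
            Matrix.cons_val_zero, Matrix.cons_val_one, Matrix.head_cons] <;> omega
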